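/- Let R be a finite commutative chain ring, S a Galois extension of R of degree m with residue field F_{q^m} and natural projection Ψ : S → F_{q^m} extended coefficient-by-coefficient. Let C be an F_{q^m}-linear rank metric code of length n, rank k, and minimum rank distance d, generated by g_1,…,g_k ∈ F_{q^m}^n. For each j choose g'_j ∈ S^n with Ψ(g'_j) = g_j, and let C' be the S-linear code generated by g'_1,…,g'_k. Then C' is a free S-linear rank metric code of length n, rank k, and minimum rank distance d. -/

import Mathlib

open IsLocalRing

/-- The rank of a submodule `N`: the smallest number of elements generating `N`. -/
noncomputable def subrank {R M : Type*} [Semiring R] [AddCommMonoid M] [Module R M]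
    (N : Submodule R M) : ℕ :=
  sInf {k | ∃ f : Fin k → M, Submodule.span R (Set.range f) = N}

/-- The rank of a vector `u ∈ S^n` over `R`: the smallest number of generators of the
`R`-submodule of `S` generated by the coordinates of `u` (i.e. of the support of `u`). -/
noncomputable def vecrank (R : Type*) {S : Type*} {n : ℕ} [Semiring R] [AddCommMonoid S]
    [Module R S] (u : Fin n → S) : ℕ :=
  subrank (Submodule.span R (Set.range u))

/-- The minimum rank distance of a linear code `C ⊆ S^n`, ranks being taken over `K`. -/
noncomputable def minrkdist (K : Type*) {S : Type*} {n : ℕ} [Semiring K] [Ring S]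
    [Module K S] (C : Submodule S (Fin n → S)) : ℕ :=
  sInf {d | ∃ u ∈ C, ∃ v ∈ C, u ≠ v ∧ vecrank K (u - v) = d}

/-- The residue field of `S` as an algebra over the residue field of `R`, via the map
induced by `algebraMap R S`. -/
noncomputable instance residueFieldAlgebra {R S : Type*} [CommRing R] [IsLocalRing R]
    [CommRing S] [IsLocalRing S] [Algebra R S] [IsLocalHom (algebraMap R S)] :
    Algebra (ResidueField R) (ResidueField S) :=
  (ResidueField.map (algebraMap R S)).toAlgebra

/-- Let `R` be a finite commutative chain ring, `S` a Galois extension of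
`R` of degree `m` with residue field `F_{q^m}` and natural projection `Ψ`.  Let `C` be an
`F_{q^m}`-linear rank metric code of length `n`, rank `k` and minimum rank distance `d`,
generated by `g₁, …, g_k`.  Choosing lifts `g'ⱼ ∈ S^n` with `Ψ(g'ⱼ) = gⱼ`, the `S`-linear
code `C'` generated by `g'₁, …, g'_k` is a free `S`-linear rank metric code of length `n`,
rank `k`, and minimum rank distance `d`. -/
lemma subrank_le_of_span_eq {R M : Type*} [Semiring R] [AddCommMonoid M] [Module R M]
    {N : Submodule R M} {k : ℕ} (f : Fin k → M) (h : Submodule.span R (Set.range f) = N) :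
    subrank N ≤ k := Nat.sInf_le ⟨f, h⟩

lemma exists_span_fun_subrank {R M : Type*} [Semiring R] [AddCommMonoid M] [Module R M]
    {N : Submodule R M} {k : ℕ} (f : Fin k → M) (h : Submodule.span R (Set.range f) = N) :
    ∃ f' : Fin (subrank N) → M, Submodule.span R (Set.range f') = N :=
  Nat.sInf_mem (s := {k | ∃ f : Fin k → M, Submodule.span R (Set.range f) = N}) ⟨k, f, h⟩

lemma subrank_eq_finrank {K M : Type*} [DivisionRing K] [AddCommGroup M] [Module K M]
    [FiniteDimensional K M] (N : Submodule K M) :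
    subrank N = Module.finrank K ↥N := by
  have hb : Submodule.span K (Set.range fun i => (Module.finBasis K ↥N i : M)) = N := by
    have : (Set.range fun i => (Module.finBasis K ↥N i : M)) =
        N.subtype '' Set.range (Module.finBasis K ↥N) := by
      rw [← Set.range_comp]; rfl
    rw [this, Submodule.span_image, Module.Basis.span_eq, Submodule.map_top, Submodule.range_subtype]
  refine le_antisymm (subrank_le_of_span_eq _ hb) ?_
  refine le_csInf ⟨_, _, hb⟩ ?_
  rintro b ⟨f, hf⟩
  calc Module.finrank K ↥N = Module.finrank K ↥(Submodule.span K (Set.range f)) := by rw [hf]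
    _ ≤ Fintype.card (Fin b) := finrank_range_le_card f
    _ = b := Fintype.card_fin b

lemma residue_smul {R S : Type*} [CommRing R] [IsLocalRing R] [CommRing S] [IsLocalRing S]
    [Algebra R S] [IsLocalHom (algebraMap R S)] (r : R) (s : S) :
    residue S (r • s) = residue R r • residue S s := by
  rw [Algebra.smul_def, Algebra.smul_def, map_mul]
  congr 1

lemma rf_smul_eq {R S : Type*} [CommRing R] [IsLocalRing R]
    [CommRing S] [IsLocalRing S] [Algebra R S] [IsLocalHom (algebraMap R S)]
    (a : ResidueField R) (b : ResidueField S) :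
    @HSMul.hSMul _ _ _ (@instHSMul _ _ (residueFieldAlgebra (R := R) (S := S)).toSMul) a b
      = @HSMul.hSMul _ _ _ (@instHSMul _ _ (ResidueField.instModule (R := R) (S := S)).toDistribMulAction.toDistribSMul.toSMul) a b := by
  obtain ⟨x, rfl⟩ := residue_surjective a
  obtain ⟨y, rfl⟩ := residue_surjective b
  rw [Algebra.smul_def]
  trans residue S (algebraMap R S x) * residue S y
  · rfl
  · exact (@Algebra.smul_def _ _ _ _ (ResidueField.instAlgebra (R := R) (S := S)) (residue R x) (residue S y)).symm

theorem lift_of_code_is_free_same_rank_same_minDist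
    (R S : Type*) [CommRing R] [Finite R] [IsLocalRing R] [IsPrincipalIdealRing R]
    [CommRing S] [Finite S] [IsLocalRing S] [IsPrincipalIdealRing S]
    [Algebra R S] [IsLocalHom (algebraMap R S)] [Module.Free R S]
    (m : ℕ) (hm : Module.finrank R S = m)
    (hGal : maximalIdeal S = Ideal.map (algebraMap R S) (maximalIdeal R))
    (n k d : ℕ) (g : Fin k → (Fin n → ResidueField S))
    (C : Submodule (ResidueField S) (Fin n → ResidueField S))
    (hC : C = Submodule.span (ResidueField S) (Set.range g))
    (hk : subrank C = k) (hd : minrkdist (ResidueField R) C = d)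
    (g' : Fin k → (Fin n → S)) (hg' : ∀ j i, residue S (g' j i) = g j i)
    (C' : Submodule S (Fin n → S)) (hC' : C' = Submodule.span S (Set.range g')) :
    Module.Free S ↥C' ∧ subrank C' = k ∧ minrkdist R C' = d := by
  classical
  subst hC hC'
  haveI : Finite (ResidueField S) := Finite.of_surjective _ (residue_surjective (R := S))
  haveI : Finite (ResidueField R) := Finite.of_surjective _ (residue_surjective (R := R))
  haveI : Module.Finite (ResidueField R) (ResidueField S) := Module.Finite.of_finite
  -- the generator of the maximal ideal of S
  obtain ⟨p, hp⟩ := (IsPrincipalIdealRing.principal (maximalIdeal R)).principal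
  rw [Ideal.submodule_span_eq] at hp
  set π : S := algebraMap R S p with hπdef
  have hπ : maximalIdeal S = Ideal.span {π} := by
    rw [hGal, hp, Ideal.map_span, Set.image_singleton]
  -- nilpotency
  have hnilex : ∃ N : ℕ, π ^ N = 0 := by
    obtain ⟨N, hN⟩ := IsArtinianRing.isNilpotent_jacobson_bot (R := S)
    refine ⟨N, ?_⟩
    have hπm : π ∈ maximalIdeal S := by rw [hπ]; exact Ideal.mem_span_singleton_self π
    rw [← jacobson_eq_maximalIdeal (⊥ : Ideal S) bot_ne_top] at hπm
    have := Ideal.pow_mem_pow hπm N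
    rw [hN] at this
    simpa using this
  set e := Nat.find hnilex with hedef
  have he : π ^ e = 0 := Nat.find_spec hnilex
  have hepos : 0 < e := by
    rcases Nat.eq_zero_or_pos e with h0 | h; · rw [h0, pow_zero] at he; exact absurd he one_ne_zero
    · exact h
  set E := e - 1 with hEdef
  have hE : π ^ E ≠ 0 := Nat.find_min hnilex (by omega)
  have hπE : π ^ E * π = 0 := by rw [← pow_succ]; rw [show E + 1 = e by omega]; exact he
  -- residue of something killed by a nonzero power of π is zero
  have hkill : ∀ (t : ℕ) (x : S), π ^ t ≠ 0 → π ^ t * x = 0 → residue S x = 0 := by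
    intro t x ht hx
    refine Ideal.Quotient.eq_zero_iff_mem.mpr ((mem_maximalIdeal x).mpr ?_)
    intro hu
    rcases hu with ⟨u, rfl⟩
    exact ht (by calc π ^ t = π ^ t * u * (u⁻¹ : Sˣ) := by rw [mul_assoc, ← Units.val_mul,
          mul_inv_cancel, Units.val_one, mul_one]
      _ = 0 := by rw [hx, zero_mul])
  -- linear independence of g
  have hgind : LinearIndependent (ResidueField S) g := by
    rw [linearIndependent_iff_card_eq_finrank_span, Fintype.card_fin]
    rw [show (Set.range g).finrank (ResidueField S)
        = Module.finrank (ResidueField S) ↥(Submodule.span (ResidueField S) (Set.range g))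
        from rfl]
    rw [← subrank_eq_finrank, hk]
  -- residue of a coordinate of a combination
  have hressum : ∀ (b : Fin k → S) (i : Fin n),
      residue S ((∑ j, b j • g' j) i) = ∑ j, residue S (b j) * g j i := by
    intro b i
    simp only [Finset.sum_apply, Pi.smul_apply, smul_eq_mul, map_sum, map_mul]
    exact Finset.sum_congr rfl fun j _ => by rw [hg']
  -- a combination with a unit coefficient has a unit coordinate
  have hres : ∀ (b : Fin k → S) (j0 : Fin k), b j0 ∉ maximalIdeal S →
      ∃ i, (∑ j, b j • g' j) i ∉ maximalIdeal S := by
    intro b j0 hb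
    have hb0 : residue S (b j0) ≠ 0 := fun h => hb (Ideal.Quotient.eq_zero_iff_mem.mp h)
    have hv : (∑ j, residue S (b j) • g j) ≠ 0 := by
      intro h
      exact hb0 (Fintype.linearIndependent_iff.mp hgind _ h j0)
    obtain ⟨i, hi⟩ := Function.ne_iff.mp hv
    refine ⟨i, fun hmem => hi ?_⟩
    have : residue S ((∑ j, b j • g' j) i) = 0 := Ideal.Quotient.eq_zero_iff_mem.mpr hmem
    rw [hressum] at this
    simpa [Finset.sum_apply, Pi.smul_apply, smul_eq_mul] using this
  -- decomposition of coefficient vectors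
  have hdecomp : ∀ a : Fin k → S, (∃ j, a j ≠ 0) →
      ∃ (t : ℕ) (b : Fin k → S) (j0 : Fin k),
        (∀ j, a j = π ^ t * b j) ∧ b j0 ∉ maximalIdeal S := by
    intro a ⟨j1, hj1⟩
    have hex : ∃ t, ¬ ∀ j, a j ∈ Ideal.span {π ^ t} := by
      refine ⟨e, fun h => hj1 ?_⟩
      have := h j1
      rw [he, Ideal.mem_span_singleton] at this
      exact zero_dvd_iff.mp this
    set t1 := Nat.find hex with ht1def
    have ht1 := Nat.find_spec hex
    have ht1pos : 0 < t1 := by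
      rcases Nat.eq_zero_or_pos t1 with h0 | h
      · exfalso
        rw [ht1def] at h0
        have := Nat.find_spec hex
        rw [h0] at this
        exact this fun j => by rw [pow_zero, Ideal.span_singleton_one]; trivial
      · exact h
    have hall : ∀ j, a j ∈ Ideal.span {π ^ (t1 - 1)} :=
      not_not.mp (Nat.find_min hex (by omega))
    obtain ⟨j0, hj0⟩ := not_forall.mp ht1
    choose b hb using fun j => Ideal.mem_span_singleton'.mp (hall j)
    refine ⟨t1 - 1, b, j0, fun j => by rw [← hb j, mul_comm], fun hmem => ?_⟩
    rw [hπ, Ideal.mem_span_singleton] at hmem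
    obtain ⟨c, hc⟩ := hmem
    refine hj0 (Ideal.mem_span_singleton'.mpr ⟨c, ?_⟩)
    rw [← hb j0, hc]
    calc c * π ^ t1 = c * (π ^ (t1 - 1) * π) := by rw [← pow_succ, Nat.sub_add_cancel ht1pos]
      _ = π * c * π ^ (t1 - 1) := by ring
  -- linear independence of g'
  have hg'ind : LinearIndependent S g' := by
    rw [Fintype.linearIndependent_iff]
    intro a ha
    by_contra hcon
    push_neg at hcon
    obtain ⟨j1, hj1⟩ := hcon
    obtain ⟨t, b, j0, hab, hbj0⟩ := hdecomp a ⟨j1, hj1⟩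
    obtain ⟨i, hi⟩ := hres b j0 hbj0
    have h0 : π ^ t * (∑ j, b j • g' j) i = 0 := by
      have : (∑ j, a j • g' j) i = π ^ t * (∑ j, b j • g' j) i := by
        simp only [Finset.sum_apply, Pi.smul_apply, smul_eq_mul, Finset.mul_sum]
        exact Finset.sum_congr rfl fun j _ => by rw [hab j]; ring
      rw [← this, ha]; rfl
    have hπt : π ^ t = 0 := by
      by_contra hπt
      exact hi ((mem_maximalIdeal _).mpr fun hu => by
        rcases hu with ⟨u, hu⟩
        exact hπt (by
          calc π ^ t = π ^ t * ((∑ j, b j • g' j) i) * (u⁻¹ : Sˣ) := by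
                rw [← hu, mul_assoc, ← Units.val_mul, mul_inv_cancel, Units.val_one, mul_one]
            _ = 0 := by rw [h0, zero_mul]))
    exact hj1 (by rw [hab j1, hπt, zero_mul])
  have hfree : Module.Free S ↥(Submodule.span S (Set.range g')) :=
    Module.Free.of_basis (Module.Basis.span hg'ind)
  -- part 2 : subrank
  have hsub : subrank (Submodule.span S (Set.range g')) = k := by
    refine le_antisymm (subrank_le_of_span_eq g' rfl) ?_
    obtain ⟨f, hf⟩ := exists_span_fun_subrank (R := S) g' rfl
    have hCle : Submodule.span (ResidueField S) (Set.range g)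
        ≤ Submodule.span (ResidueField S)
          (Set.range fun l => fun i => residue S (f l i)) := by
      rw [Submodule.span_le]
      rintro _ ⟨j, rfl⟩
      have hmem : g' j ∈ Submodule.span S (Set.range f) := by
        rw [hf]; exact Submodule.subset_span ⟨j, rfl⟩
      obtain ⟨cc, hcc⟩ := (Submodule.mem_span_range_iff_exists_fun _).mp hmem
      refine SetLike.mem_coe.mpr ((Submodule.mem_span_range_iff_exists_fun _).mpr
        ⟨fun l => residue S (cc l), funext fun i => ?_⟩)
      calc (∑ l, residue S (cc l) • fun i' => residue S (f l i')) i
          = ∑ l, residue S (cc l) * residue S (f l i) := by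
            simp [Finset.sum_apply]
        _ = residue S ((∑ l, cc l • f l) i) := by
            simp [Finset.sum_apply, map_sum, map_mul]
        _ = g j i := by rw [hcc, hg']
    calc k = Module.finrank (ResidueField S)
          ↥(Submodule.span (ResidueField S) (Set.range g)) := by
          rw [← subrank_eq_finrank, hk]
      _ ≤ Module.finrank (ResidueField S) ↥(Submodule.span (ResidueField S)
          (Set.range fun l => fun i => residue S (f l i))) := Submodule.finrank_mono hCle
      _ ≤ Fintype.card (Fin (subrank (Submodule.span S (Set.range g')))) :=
          finrank_range_le_card _
      _ = subrank (Submodule.span S (Set.range g')) := Fintype.card_fin _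
  -- key lower bound
  have keyLB : ∀ (t : ℕ) (u : Fin n → S), π ^ t ≠ 0 →
      Module.finrank (ResidueField R) ↥(Submodule.span (ResidueField R)
        (Set.range fun i => residue S (u i)))
      ≤ subrank (Submodule.span R (Set.range (π ^ t • u))) := by
    intro t u ht
    obtain ⟨f, hf⟩ := exists_span_fun_subrank (R := R) (π ^ t • u) rfl
    have hfl : ∀ l, ∃ v : S, f l = π ^ t * v := by
      intro l
      have hmem : f l ∈ Submodule.span R (Set.range (π ^ t • u)) := by
        rw [← hf]; exact Submodule.subset_span ⟨l, rfl⟩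
      obtain ⟨c, hc⟩ := (Submodule.mem_span_range_iff_exists_fun _).mp hmem
      refine ⟨∑ i, c i • u i, ?_⟩
      rw [← hc, Finset.mul_sum]
      exact Finset.sum_congr rfl fun i _ => by
        rw [Pi.smul_apply, smul_eq_mul, mul_smul_comm]
    choose v hv using hfl
    have hui : ∀ i, residue S (u i) ∈ Submodule.span (ResidueField R)
        (Set.range fun l => residue S (v l)) := by
      intro i
      have hm : (π ^ t • u) i ∈ Submodule.span R (Set.range f) := by
        rw [hf]; exact Submodule.subset_span ⟨i, rfl⟩
      obtain ⟨r, hr⟩ := (Submodule.mem_span_range_iff_exists_fun _).mp hm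
      have h0 : π ^ t * (u i - ∑ l, r l • v l) = 0 := by
        have h1 : ∑ l, r l • f l = π ^ t * ∑ l, r l • v l := by
          rw [Finset.mul_sum]
          exact Finset.sum_congr rfl fun l _ => by rw [hv l, mul_smul_comm]
        have h2 : (π ^ t • u) i = π ^ t * u i := by rw [Pi.smul_apply, smul_eq_mul]
        rw [mul_sub, ← h1, hr, h2, sub_self]
      have hkl := hkill t _ ht h0
      rw [map_sub, sub_eq_zero, map_sum] at hkl
      rw [hkl]
      refine Submodule.sum_mem _ fun l _ => ?_
      rw [residue_smul]
      rw [rf_smul_eq]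
      exact Submodule.smul_mem _ _ (Submodule.subset_span ⟨l, rfl⟩)
    have hle : Submodule.span (ResidueField R) (Set.range fun i => residue S (u i))
        ≤ Submodule.span (ResidueField R) (Set.range fun l => residue S (v l)) := by
      rw [Submodule.span_le]; rintro _ ⟨i, rfl⟩; exact SetLike.mem_coe.mpr (hui i)
    calc Module.finrank (ResidueField R) ↥(Submodule.span (ResidueField R)
          (Set.range fun i => residue S (u i)))
        ≤ Module.finrank (ResidueField R) ↥(Submodule.span (ResidueField R)
          (Set.range fun l => residue S (v l))) := Submodule.finrank_mono hle
      _ ≤ Fintype.card (Fin (subrank (Submodule.span R (Set.range (π ^ t • u))))) :=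
          finrank_range_le_card _
      _ = _ := Fintype.card_fin _
  refine ⟨hfree, hsub, ?_⟩
  -- part 3
  rcases Nat.eq_zero_or_pos k with hk0 | hkpos
  · -- k = 0 : both codes are trivial
    subst hk0
    have hCbot : Submodule.span (ResidueField S) (Set.range g) = ⊥ := by
      rw [Set.range_eq_empty g, Submodule.span_empty]
    have hC'bot : Submodule.span S (Set.range g') = ⊥ := by
      rw [Set.range_eq_empty g', Submodule.span_empty]
    have hsetC : {δ | ∃ u ∈ Submodule.span (ResidueField S) (Set.range g),
        ∃ v ∈ Submodule.span (ResidueField S) (Set.range g),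
          u ≠ v ∧ vecrank (ResidueField R) (u - v) = δ} = ∅ := by
      rw [Set.eq_empty_iff_forall_notMem]
      rintro δ ⟨u, hu, v, hv, hne, -⟩
      rw [hCbot, Submodule.mem_bot] at hu hv
      exact hne (hu.trans hv.symm)
    have hsetC' : {δ | ∃ u ∈ Submodule.span S (Set.range g'),
        ∃ v ∈ Submodule.span S (Set.range g'),
          u ≠ v ∧ vecrank R (u - v) = δ} = ∅ := by
      rw [Set.eq_empty_iff_forall_notMem]
      rintro δ ⟨u, hu, v, hv, hne, -⟩
      rw [hC'bot, Submodule.mem_bot] at hu hv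
      exact hne (hu.trans hv.symm)
    have hd0 : d = 0 := by
      rw [← hd]
      show sInf {δ | ∃ u ∈ Submodule.span (ResidueField S) (Set.range g),
        ∃ v ∈ Submodule.span (ResidueField S) (Set.range g),
          u ≠ v ∧ vecrank (ResidueField R) (u - v) = δ} = 0
      rw [hsetC, Nat.sInf_empty]
    rw [hd0]
    show sInf {δ | ∃ u ∈ Submodule.span S (Set.range g'),
        ∃ v ∈ Submodule.span S (Set.range g'),
          u ≠ v ∧ vecrank R (u - v) = δ} = 0
    rw [hsetC', Nat.sInf_empty]
  · -- k > 0
    have hd' : sInf {δ | ∃ u ∈ Submodule.span (ResidueField S) (Set.range g),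
        ∃ v ∈ Submodule.span (ResidueField S) (Set.range g),
          u ≠ v ∧ vecrank (ResidueField R) (u - v) = δ} = d := hd
    have hsetCne : Set.Nonempty {δ | ∃ u ∈ Submodule.span (ResidueField S) (Set.range g),
        ∃ v ∈ Submodule.span (ResidueField S) (Set.range g),
          u ≠ v ∧ vecrank (ResidueField R) (u - v) = δ} :=
      ⟨vecrank (ResidueField R) (g ⟨0, hkpos⟩ - 0),
        g ⟨0, hkpos⟩, Submodule.subset_span ⟨_, rfl⟩, 0, Submodule.zero_mem _,
        hgind.ne_zero _, rfl⟩
    have hlbC : ∀ x : Fin n → ResidueField S,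
        x ∈ Submodule.span (ResidueField S) (Set.range g) → x ≠ 0 →
        d ≤ vecrank (ResidueField R) x := by
      intro x hx hx0
      have hmem : vecrank (ResidueField R) (x - 0) ∈
          {δ | ∃ u ∈ Submodule.span (ResidueField S) (Set.range g),
            ∃ v ∈ Submodule.span (ResidueField S) (Set.range g),
              u ≠ v ∧ vecrank (ResidueField R) (u - v) = δ} :=
        ⟨x, hx, 0, Submodule.zero_mem _, hx0, rfl⟩
      have h2 := Nat.sInf_le hmem
      rw [hd', sub_zero] at h2
      exact h2
    have hdmem := Nat.sInf_mem hsetCne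
    rw [hd'] at hdmem
    obtain ⟨u₀, hu₀, v₀, hv₀, hne₀, hval₀⟩ := hdmem
    set c : Fin n → ResidueField S := u₀ - v₀ with hcdef
    have hcC : c ∈ Submodule.span (ResidueField S) (Set.range g) := sub_mem hu₀ hv₀
    have hc0 : c ≠ 0 := sub_ne_zero.mpr hne₀
    obtain ⟨lam, hlam⟩ := (Submodule.mem_span_range_iff_exists_fun _).mp hcC
    choose lam' hlam' using fun j => residue_surjective (R := S) (lam j)
    set c' : Fin n → S := ∑ j, lam' j • g' j with hc'def
    have hc'mem : c' ∈ Submodule.span S (Set.range g') :=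
      Submodule.sum_mem _ fun j _ => Submodule.smul_mem _ _ (Submodule.subset_span ⟨j, rfl⟩)
    have hc'res : ∀ i, residue S (c' i) = c i := by
      intro i
      calc residue S (c' i) = ∑ j, residue S (lam' j) * g j i := hressum lam' i
        _ = (∑ j, lam j • g j) i := by simp [Finset.sum_apply, hlam']
        _ = c i := by rw [hlam]
    have hresc : (fun i => residue S (c' i)) = c := funext hc'res
    set w : Fin n → S := π ^ E • c' with hwdef
    have hwC' : w ∈ Submodule.span S (Set.range g') := Submodule.smul_mem _ _ hc'mem
    have hdfr : Module.finrank (ResidueField R)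
        ↥(Submodule.span (ResidueField R) (Set.range c)) = d := by
      rw [← subrank_eq_finrank]; exact hval₀
    have hge : d ≤ subrank (Submodule.span R (Set.range w)) := by
      have hky := keyLB E c' hE
      rw [hresc, hdfr] at hky
      exact hky
    -- collapse helper
    have hcollapse : ∀ (x : S) (N : ℕ) (y : Fin N → S) (ν : Fin N → ResidueField R),
        (residue S x = ∑ l, ν l • residue S (y l)) →
        ∃ ν' : Fin N → R, π ^ E * x = ∑ l, ν' l • (π ^ E * y l) := by
      intro x N y ν hxy
      choose ν' hν' using fun l => residue_surjective (R := R) (ν l)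
      have hz : residue S (x - ∑ l, ν' l • y l) = 0 := by
        rw [map_sub, map_sum, sub_eq_zero, hxy]
        exact Finset.sum_congr rfl fun l _ => by rw [residue_smul, hν']
      have hzm : x - ∑ l, ν' l • y l ∈ maximalIdeal S :=
        Ideal.Quotient.eq_zero_iff_mem.mp hz
      rw [hπ] at hzm
      obtain ⟨cz, hcz⟩ := Ideal.mem_span_singleton'.mp hzm
      refine ⟨ν', ?_⟩
      have hx2 : x = (∑ l, ν' l • y l) + cz * π := by rw [hcz]; ring
      have hkz : π ^ E * (cz * π) = 0 := by
        rw [show π ^ E * (cz * π) = cz * (π ^ E * π) by ring, hπE, mul_zero]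
      rw [hx2, mul_add, Finset.mul_sum, hkz, add_zero]
      exact Finset.sum_congr rfl fun l _ => mul_smul_comm _ _ _
    have hvald : subrank (Submodule.span (ResidueField R) (Set.range c)) = d := hval₀
    have hex2 : ∃ f : Fin d → ResidueField S,
        Submodule.span (ResidueField R) (Set.range f)
          = Submodule.span (ResidueField R) (Set.range c) := by
      rw [← hvald]
      exact exists_span_fun_subrank (R := ResidueField R) c rfl
    obtain ⟨f, hf⟩ := hex2
    choose f' hf' using fun l => residue_surjective (R := S) (f l)
    have hub : subrank (Submodule.span R (Set.range w)) ≤ d := by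
      refine subrank_le_of_span_eq (fun l => π ^ E * f' l) (le_antisymm ?_ ?_)
      · rw [Submodule.span_le]
        rintro _ ⟨l, rfl⟩
        have h1 : f l ∈ Submodule.span (ResidueField R) (Set.range c) := by
          rw [← hf]; exact Submodule.subset_span ⟨l, rfl⟩
        rw [← hresc] at h1
        obtain ⟨ν, hν⟩ := (Submodule.mem_span_range_iff_exists_fun _).mp h1
        obtain ⟨ν', hν'2⟩ := hcollapse (f' l) n c' ν (by rw [hf' l, ← hν]; simp only [rf_smul_eq])
        show π ^ E * f' l ∈ (Submodule.span R (Set.range w) : Set S)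
        have heq : π ^ E * f' l = ∑ i, ν' i • w i := hν'2
        rw [heq]
        exact Submodule.sum_mem _ fun i _ =>
          Submodule.smul_mem _ _ (Submodule.subset_span ⟨i, rfl⟩)
      · rw [Submodule.span_le]
        rintro _ ⟨i, rfl⟩
        have h1 : c i ∈ Submodule.span (ResidueField R) (Set.range f) := by
          rw [hf]; exact Submodule.subset_span ⟨i, rfl⟩
        obtain ⟨ν, hν⟩ := (Submodule.mem_span_range_iff_exists_fun _).mp h1
        obtain ⟨ν', hν'2⟩ := hcollapse (c' i) d f' ν (by
          rw [hc'res i, ← hν]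
          exact Finset.sum_congr rfl fun l _ => by rw [hf', rf_smul_eq])
        have heq : w i = ∑ l, ν' l • (π ^ E * f' l) := hν'2
        rw [heq]
        exact Submodule.sum_mem _ fun l _ =>
          Submodule.smul_mem _ _ (Submodule.subset_span ⟨l, rfl⟩)
    have hw0 : w ≠ 0 := by
      obtain ⟨i0, hi0⟩ := Function.ne_iff.mp hc0
      simp only [Pi.zero_apply] at hi0
      intro hw
      apply hE
      have hunit : IsUnit (c' i0) := by
        by_contra hnu
        refine hi0 ?_
        rw [← hc'res i0]
        exact Ideal.Quotient.eq_zero_iff_mem.mpr ((mem_maximalIdeal _).mpr hnu)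
      obtain ⟨u, hu⟩ := hunit
      have hz : π ^ E * c' i0 = 0 := by
        have : w i0 = 0 := by rw [hw]; rfl
        exact this
      calc π ^ E = π ^ E * c' i0 * (u⁻¹ : Sˣ) := by
            rw [← hu, mul_assoc, ← Units.val_mul, mul_inv_cancel, Units.val_one, mul_one]
        _ = 0 := by rw [hz, zero_mul]
    have hwvec : vecrank R (w - 0) ∈ {δ | ∃ u ∈ Submodule.span S (Set.range g'),
        ∃ v ∈ Submodule.span S (Set.range g'), u ≠ v ∧ vecrank R (u - v) = δ} :=
      ⟨w, hwC', 0, Submodule.zero_mem _, hw0, rfl⟩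
    refine le_antisymm ?_ ?_
    · have h1 := Nat.sInf_le hwvec
      have h2 : vecrank R (w - 0) = d := by
        rw [sub_zero]; exact le_antisymm hub hge
      rw [h2] at h1
      exact h1
    · have hC'ne : Set.Nonempty {δ | ∃ u ∈ Submodule.span S (Set.range g'),
          ∃ v ∈ Submodule.span S (Set.range g'), u ≠ v ∧ vecrank R (u - v) = δ} :=
        ⟨_, hwvec⟩
      have hmem := Nat.sInf_mem hC'ne
      obtain ⟨u, hu, v, hv, huv, hval⟩ := hmem
      show d ≤ sInf {δ | ∃ u ∈ Submodule.span S (Set.range g'),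
          ∃ v ∈ Submodule.span S (Set.range g'), u ≠ v ∧ vecrank R (u - v) = δ}
      rw [← hval]
      have hxC' : u - v ∈ Submodule.span S (Set.range g') := sub_mem hu hv
      have hx0 : u - v ≠ 0 := sub_ne_zero.mpr huv
      obtain ⟨a, ha⟩ := (Submodule.mem_span_range_iff_exists_fun _).mp hxC'
      have hasome : ∃ j, a j ≠ 0 := by
        by_contra hno
        push_neg at hno
        refine hx0 ?_
        rw [← ha]
        exact Finset.sum_eq_zero fun j _ => by rw [hno, zero_smul]
      obtain ⟨t, b, j0, hab, hbj0⟩ := hdecomp a hasome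
      have hxw' : u - v = π ^ t • (∑ j, b j • g' j) := by
        funext i
        show (u - v) i = π ^ t * (∑ j, b j • g' j) i
        rw [← ha]
        simp only [Finset.sum_apply, Pi.smul_apply, smul_eq_mul, Finset.mul_sum]
        exact Finset.sum_congr rfl fun j _ => by rw [hab j]; ring
      have hπt : π ^ t ≠ 0 := fun h => hx0 (by rw [hxw', h, zero_smul])
      have hky := keyLB t (∑ j, b j • g' j) hπt
      have hyres : (fun i => residue S ((∑ j, b j • g' j) i))
          = ∑ j, (residue S (b j)) • g j := funext fun i => by
        calc residue S ((∑ j, b j • g' j) i) = ∑ j, residue S (b j) * g j i := hressum b i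
          _ = (∑ j, (residue S (b j)) • g j) i := by simp [Finset.sum_apply]
      have hyC : (∑ j, (residue S (b j)) • g j)
          ∈ Submodule.span (ResidueField S) (Set.range g) :=
        Submodule.sum_mem _ fun j _ =>
          Submodule.smul_mem _ _ (Submodule.subset_span ⟨j, rfl⟩)
      have hy0 : (∑ j, (residue S (b j)) • g j) ≠ 0 := by
        obtain ⟨i, hi⟩ := hres b j0 hbj0
        intro h0
        have hz : residue S ((∑ j, b j • g' j) i) = 0 := by
          rw [congrFun hyres i, h0]; rfl
        exact hi (Ideal.Quotient.eq_zero_iff_mem.mp hz)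
      calc d ≤ vecrank (ResidueField R) (∑ j, (residue S (b j)) • g j) :=
            hlbC _ hyC hy0
        _ = Module.finrank (ResidueField R) ↥(Submodule.span (ResidueField R)
            (Set.range (∑ j, (residue S (b j)) • g j))) := subrank_eq_finrank _
        _ ≤ subrank (Submodule.span R (Set.range (π ^ t • (∑ j, b j • g' j)))) := by
            rw [← hyres] at *
            exact hky
        _ = vecrank R (u - v) := by rw [← hxw']; rfl
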